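/- Lock-freeness is not preserved by PaI multicomposition, even under the no-mixed-state condition: there exist two communicating systems S_1 and S_2 over disjoint participant sets, a set of interfaces H = {h_1, h_2} for {S_1, S_2} such that neither interface has mixed states, a connection model CM for H, and a connection policy K for H complying with CM, such that S_1, S_2 and K are all lock-free, but the multicomposition MC({S_1, S_2}, K) is not lock-free (its initial configuration is an r-lock configuration for some participant r). -/

import Mathlib

namespace CFSM

/-- Direction of a communication action: output (`!`) or input (`?`). -/
inductive Dir : Type where
  | out : Dir
  | inp : Dir
deriving DecidableEq

instance instFintypeDir : Fintype Dir :=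
  ⟨{Dir.out, Dir.inp}, fun x => by cases x <;> simp⟩

/-- An action `pq!a` (output) or `pq?a` (input) over participants `P` and messages `A`:
`snd` is the sender `p`, `rcv` the receiver `q`, `msg` the message `a`. -/
structure Act (P : Type) (A : Type) : Type where
  snd : P
  rcv : P
  dir : Dir
  msg : A

instance {P A : Type} [Finite P] [Finite A] : Finite (Act P A) :=
  Finite.of_injective (fun l => (l.snd, l.rcv, l.dir, l.msg))
    (fun a b h => by
      cases a; cases b
      simp only [Prod.mk.injEq] at h
      obtain ⟨h1, h2, h3, h4⟩ := h
      subst h1; subst h2; subst h3; subst h4; rfl)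

/-- The subject of an action: the sender of an output, the receiver of an input. -/
def Act.subject {P A : Type} (l : Act P A) : P :=
  match l.dir with
  | .out => l.snd
  | .inp => l.rcv

/-- A communicating system over participants `P` and messages `A`:
one machine (state type, initial state and transition relation) per participant. -/
structure CS (P : Type) (A : Type) : Type 1 where
  St : P → Type
  init : ∀ p, St p
  delta : ∀ p, Set (St p × Act P A × St p)

/-- All actions of the machine of participant `p` have subject `p`
(the name of the machine) and distinct endpoints. -/
def CS.WellFormed {P A : Type} (S : CS P A) : Prop :=
  ∀ p t, t ∈ S.delta p → ((t.2.1 : Act P A).subject = p ∧ t.2.1.snd ≠ t.2.1.rcv)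

/-- A configuration: a local state for each machine and a FIFO buffer
for each ordered pair of participants. -/
structure Config {P A : Type} (S : CS P A) : Type where
  st : ∀ p, S.St p
  ch : P → P → List A

/-- The initial configuration: all machines in their initial state, all channels empty. -/
def CS.initConfig {P A : Type} (S : CS P A) : Config S :=
  ⟨S.init, fun _ _ => []⟩

/-- The labelled transition relation between configurations. -/
def StepL {P A : Type} (S : CS P A) (c : Config S) (l : Act P A) (c' : Config S) : Prop :=
  match l.dir with
  | .out =>
      (c.st l.snd, l, c'.st l.snd) ∈ S.delta l.snd ∧
      (∀ p, p ≠ l.snd → c'.st p = c.st p) ∧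
      c'.ch l.snd l.rcv = c.ch l.snd l.rcv ++ [l.msg] ∧
      (∀ p q, (p, q) ≠ (l.snd, l.rcv) → c'.ch p q = c.ch p q)
  | .inp =>
      (c.st l.rcv, l, c'.st l.rcv) ∈ S.delta l.rcv ∧
      (∀ p, p ≠ l.rcv → c'.st p = c.st p) ∧
      c.ch l.snd l.rcv = l.msg :: c'.ch l.snd l.rcv ∧
      (∀ p q, (p, q) ≠ (l.snd, l.rcv) → c'.ch p q = c.ch p q)

/-- Unlabelled transition relation. -/
def Step {P A : Type} (S : CS P A) (c c' : Config S) : Prop :=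
  ∃ l, StepL S c l c'

/-- Reachability between configurations. -/
def Reach {P A : Type} (S : CS P A) : Config S → Config S → Prop :=
  Relation.ReflTransGen (Step S)

/-- The set of configurations reachable from the initial configuration. -/
def RC {P A : Type} (S : CS P A) : Set (Config S) :=
  {c | Reach S S.initConfig c}

/-- A local state is final if it has no outgoing transition. -/
def FinalSt {Q P A : Type} (δ : Set (Q × Act P A × Q)) (q : Q) : Prop :=
  ∀ l q', (q, l, q') ∉ δ

/-- A local state is receiving if it is not final and all its outgoing
transitions are labelled with input actions. -/
def ReceivingSt {Q P A : Type} (δ : Set (Q × Act P A × Q)) (q : Q) : Prop :=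
  (∃ l q', (q, l, q') ∈ δ) ∧ ∀ l q', (q, l, q') ∈ δ → (l : Act P A).dir = Dir.inp

/-- A local state is mixed if it has at least one outgoing output-labelled
transition and at least one outgoing input-labelled transition. -/
def MixedSt {Q P A : Type} (δ : Set (Q × Act P A × Q)) (q : Q) : Prop :=
  (∃ l q', (q, l, q') ∈ δ ∧ (l : Act P A).dir = Dir.out) ∧
  (∃ l q', (q, l, q') ∈ δ ∧ (l : Act P A).dir = Dir.inp)

/-- A machine has no mixed states. -/
def NoMixed {Q P A : Type} (δ : Set (Q × Act P A × Q)) : Prop :=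
  ∀ q, ¬ MixedSt δ q

/-- Deadlock configuration: all channels empty but all machines in receiving states. -/
def DeadlockConfig {P A : Type} (S : CS P A) (c : Config S) : Prop :=
  (∀ p q, c.ch p q = []) ∧ ∀ p, ReceivingSt (S.delta p) (c.st p)

def DeadlockFree {P A : Type} (S : CS P A) : Prop :=
  ∀ c ∈ RC S, ¬ DeadlockConfig S c

/-- Orphan-message configuration: all machines final but some channel nonempty. -/
def OrphanConfig {P A : Type} (S : CS P A) (c : Config S) : Prop :=
  (∀ p, FinalSt (S.delta p) (c.st p)) ∧ ∃ p q, c.ch p q ≠ []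

def OrphanFree {P A : Type} (S : CS P A) : Prop :=
  ∀ c ∈ RC S, ¬ OrphanConfig S c

/-- Unspecified reception configuration: some machine `r` is in a receiving state and,
for every input transition of `r`, the corresponding channel is nonempty with a
first element different from the expected message. -/
def URConfig {P A : Type} (S : CS P A) (c : Config S) : Prop :=
  ∃ r, ReceivingSt (S.delta r) (c.st r) ∧
    ∀ s a q', (c.st r, Act.mk s r Dir.inp a, q') ∈ S.delta r →
      (c.ch s r ≠ [] ∧ ¬ ∃ w, c.ch s r = a :: w)

def ReceptionErrorFree {P A : Type} (S : CS P A) : Prop :=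
  ∀ c ∈ RC S, ¬ URConfig S c

/-- Progress: every reachable configuration has an outgoing transition or all
machines are in final states. -/
def ProgressProp {P A : Type} (S : CS P A) : Prop :=
  ∀ c ∈ RC S, (∃ c', Step S c c') ∨ ∀ p, FinalSt (S.delta p) (c.st p)

/-- `p`-lock configuration: `p` is in a receiving state and never occurs as the
subject of an action in any transition sequence from `c`. -/
def PLockConfig {P A : Type} (S : CS P A) (c : Config S) (p : P) : Prop :=
  ReceivingSt (S.delta p) (c.st p) ∧
  ∀ c1 l c2, Reach S c c1 → StepL S c1 l c2 → l.subject ≠ p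

def LockFree {P A : Type} (S : CS P A) : Prop :=
  ∀ c ∈ RC S, ∀ p, ¬ PLockConfig S c p

section Composition

variable {I : Type} {P : I → Type} {A : Type}

/-- Messages occurring in input actions of the machine of `p`. -/
def inMsgs {Pp A : Type} (S : CS Pp A) (p : Pp) : Set A :=
  {a | ∃ q s q', (q, Act.mk s p Dir.inp a, q') ∈ S.delta p}

/-- Messages occurring in output actions of the machine of `p`. -/
def outMsgs {Pp A : Type} (S : CS Pp A) (p : Pp) : Set A :=
  {a | ∃ q r q', (q, Act.mk p r Dir.out a, q') ∈ S.delta p}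

/-- `CM` is a connection model for the interfaces `hh i` of the family `S`
(the interface `h_i` is represented by its index `i`). -/
def IsConnModel (S : ∀ i, CS (P i) A) (hh : ∀ i, P i) (CM : Set (I × A × I)) : Prop :=
  ∀ i a,
    (a ∈ inMsgs (S i) (hh i) →
      ∃ j, j ≠ i ∧ a ∈ outMsgs (S j) (hh j) ∧ (i, a, j) ∈ CM) ∧
    (a ∈ outMsgs (S i) (hh i) →
      ∃ j, j ≠ i ∧ a ∈ inMsgs (S j) (hh j) ∧ (j, a, i) ∈ CM)

/-- `CM` is a strong connection model: additionally the connecting partner is unique. -/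
def IsStrongConnModel (S : ∀ i, CS (P i) A) (hh : ∀ i, P i) (CM : Set (I × A × I)) : Prop :=
  IsConnModel S hh CM ∧
  ∀ i a,
    (a ∈ inMsgs (S i) (hh i) → ∃! j, (i, a, j) ∈ CM) ∧
    (a ∈ outMsgs (S i) (hh i) → ∃! j, (j, a, i) ∈ CM)

/-- Conditions (*) and (**) for a candidate transition relation `d` of the local
connection policy of interface `hh i` (the name `k_i` is represented by `i`). -/
def PolicySat (S : ∀ i, CS (P i) A) (hh : ∀ i, P i) (CM : Set (I × A × I)) (i : I)
    (d : Set ((S i).St (hh i) × Act I A × (S i).St (hh i))) : Prop :=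
  (∀ q r a q', (q, Act.mk r (hh i) Dir.inp a, q') ∈ (S i).delta (hh i) →
      ∃ j, j ≠ i ∧ (i, a, j) ∈ CM ∧ (q, Act.mk i j Dir.out a, q') ∈ d) ∧
  (∀ q r a q', (q, Act.mk (hh i) r Dir.out a, q') ∈ (S i).delta (hh i) →
      ∃ j, j ≠ i ∧ (j, a, i) ∈ CM ∧ (q, Act.mk j i Dir.inp a, q') ∈ d)

/-- `d` belongs to the local connection policy set `IS(M_{h_i}, CM)`:
it is a minimal relation satisfying (*) and (**).  (The states `q̇` of the
policy machine are identified with the states `q` of `M_{h_i}`.) -/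
def InIS (S : ∀ i, CS (P i) A) (hh : ∀ i, P i) (CM : Set (I × A × I)) (i : I)
    (d : Set ((S i).St (hh i) × Act I A × (S i).St (hh i))) : Prop :=
  PolicySat S hh CM i d ∧ ∀ d', d' ⊆ d → PolicySat S hh CM i d' → d' = d

/-- The communicating system (over the participant type `I` of names `k_i`)
determined by the family of transition relations `Kd` of a connection policy. -/
def policyCS (S : ∀ i, CS (P i) A) (hh : ∀ i, P i)
    (Kd : ∀ i, Set ((S i).St (hh i) × Act I A × (S i).St (hh i))) : CS I A where
  St := fun i => (S i).St (hh i)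
  init := fun i => (S i).init (hh i)
  delta := Kd

/-- `Kd` is a connection policy for the interfaces `hh` complying with `CM`. -/
def IsConnPolicy (S : ∀ i, CS (P i) A) (hh : ∀ i, P i) (CM : Set (I × A × I))
    (Kd : ∀ i, Set ((S i).St (hh i) × Act I A × (S i).St (hh i))) : Prop :=
  ∀ i, InIS S hh CM i (Kd i)

/-- States of the gateway for interface `hh i`: the original states plus one
fresh state per transition of `M_{h_i}`. -/
abbrev GWState (S : ∀ i, CS (P i) A) (hh : ∀ i, P i) (i : I) : Type :=
  (S i).St (hh i) ⊕ ((S i).St (hh i) × Act (P i) A × (S i).St (hh i))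

/-- Lifting of a local action of system `i` to the composed participant type. -/
def liftAct (i : I) (l : Act (P i) A) : Act ((j : I) × P j) A :=
  Act.mk ⟨i, l.snd⟩ ⟨i, l.rcv⟩ l.dir l.msg

/-- Transition relation of the gateway `M_{h_i} ⟲ M_{k_i}`. -/
def GWdelta (S : ∀ i, CS (P i) A) (hh : ∀ i, P i)
    (Kd : ∀ i, Set ((S i).St (hh i) × Act I A × (S i).St (hh i))) (i : I) :
    Set (GWState S hh i × Act ((j : I) × P j) A × GWState S hh i) :=
  {x | ∃ q a q',
    (∃ s r, (q, Act.mk (hh i) s Dir.out a, q') ∈ (S i).delta (hh i) ∧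
        (q, Act.mk r i Dir.inp a, q') ∈ Kd i ∧
        (x = (Sum.inl q, Act.mk ⟨r, hh r⟩ ⟨i, hh i⟩ Dir.inp a,
              Sum.inr (q, Act.mk (hh i) s Dir.out a, q')) ∨
         x = (Sum.inr (q, Act.mk (hh i) s Dir.out a, q'),
              Act.mk ⟨i, hh i⟩ ⟨i, s⟩ Dir.out a, Sum.inl q'))) ∨
    (∃ s r, (q, Act.mk s (hh i) Dir.inp a, q') ∈ (S i).delta (hh i) ∧
        (q, Act.mk i r Dir.out a, q') ∈ Kd i ∧
        (x = (Sum.inl q, Act.mk ⟨i, s⟩ ⟨i, hh i⟩ Dir.inp a,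
              Sum.inr (q, Act.mk s (hh i) Dir.inp a, q')) ∨
         x = (Sum.inr (q, Act.mk s (hh i) Dir.inp a, q'),
              Act.mk ⟨i, hh i⟩ ⟨r, hh r⟩ Dir.out a, Sum.inl q')))}

open Classical in
/-- State type of the machine of participant `⟨i, p⟩` in the multicomposition:
the gateway state type if `p` is the interface of system `i`, the original
state type otherwise. -/
noncomputable def MCSt (S : ∀ i, CS (P i) A) (hh : ∀ i, P i) (x : (i : I) × P i) : Type :=
  if x.2 = hh x.1 then GWState S hh x.1 else (S x.1).St x.2

/-- The multicomposition `MC({S_i}, K)`: all machines of the single systems,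
with the machine of each interface `hh i` replaced by its gateway. -/
noncomputable def MC (S : ∀ i, CS (P i) A) (hh : ∀ i, P i)
    (Kd : ∀ i, Set ((S i).St (hh i) × Act I A × (S i).St (hh i))) :
    CS ((i : I) × P i) A where
  St := MCSt S hh
  init := fun x => by
    by_cases hp : x.2 = hh x.1
    · have h : MCSt S hh x = GWState S hh x.1 := by simp [MCSt, hp]
      rw [h]; exact Sum.inl ((S x.1).init (hh x.1))
    · have h : MCSt S hh x = (S x.1).St x.2 := by simp [MCSt, hp]
      rw [h]; exact (S x.1).init x.2
  delta := fun x => by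
    by_cases hp : x.2 = hh x.1
    · have h : MCSt S hh x = GWState S hh x.1 := by simp [MCSt, hp]
      rw [h]; exact GWdelta S hh Kd x.1
    · have h : MCSt S hh x = (S x.1).St x.2 := by simp [MCSt, hp]
      rw [h]
      exact {t | ∃ q l q', (q, l, q') ∈ (S x.1).delta x.2 ∧ t = (q, liftAct x.1 l, q')}

/-- The state of the gateway of interface `hh i` in a configuration of the
multicomposition, as an element of `GWState`. -/
noncomputable def toGW (S : ∀ i, CS (P i) A) (hh : ∀ i, P i) (i : I)
    (x : MCSt S hh ⟨i, hh i⟩) : GWState S hh i :=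
  cast (by simp [MCSt]) x

/-- The state of a non-interface participant in a configuration of the
multicomposition, as an element of its original state type. -/
noncomputable def toLoc (S : ∀ i, CS (P i) A) (hh : ∀ i, P i) {i : I} {p : P i}
    (hp : p ≠ hh i) (x : MCSt S hh ⟨i, p⟩) : (S i).St p :=
  cast (by simp [MCSt, hp]) x

/-- Projection of a configuration of the multicomposition to system `S i`,
assuming the gateway state of `hh i` is not a fresh intermediate state
(i.e. it is of the form `Sum.inl q`). -/
noncomputable def projSys (S : ∀ i, CS (P i) A) (hh : ∀ i, P i)
    (Kd : ∀ i, Set ((S i).St (hh i) × Act I A × (S i).St (hh i)))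
    (i : I) (s : Config (MC S hh Kd))
    (hq : ∃ q, toGW S hh i (s.st ⟨i, hh i⟩) = Sum.inl q) : Config (S i) where
  st := fun p => by
    by_cases hp : p = hh i
    · rw [hp]; exact hq.choose
    · exact toLoc S hh hp (s.st ⟨i, p⟩)
  ch := fun p q => s.ch ⟨i, p⟩ ⟨i, q⟩

/-- Projection of a configuration of the multicomposition to the connection
policy `K`, assuming no gateway is in a fresh intermediate state. -/
noncomputable def projPolicy (S : ∀ i, CS (P i) A) (hh : ∀ i, P i)
    (Kd : ∀ i, Set ((S i).St (hh i) × Act I A × (S i).St (hh i)))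
    (s : Config (MC S hh Kd))
    (hq : ∀ i, ∃ q, toGW S hh i (s.st ⟨i, hh i⟩) = Sum.inl q) :
    Config (policyCS S hh Kd) where
  st := fun i => (hq i).choose
  ch := fun i j => s.ch ⟨i, hh i⟩ ⟨j, hh j⟩

end Composition

end CFSM

namespace Ctrex
open CFSM

abbrev ma : Bool := false  -- message a
abbrev mc : Bool := true   -- message c

/-- System 1: h1 = 0, p = 1, w = 2. -/
def S1 : CS (Fin 3) Bool where
  St := fun _ => Bool
  init := fun _ => false
  delta := fun p =>
    if p = 0 then
      {(false, ⟨0,1,.out,ma⟩, false), (false, ⟨0,2,.out,mc⟩, true), (true, ⟨0,1,.out,ma⟩, true)}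
    else if p = 1 then {(false, ⟨0,1,.inp,ma⟩, false)}
    else {(false, ⟨0,2,.inp,mc⟩, true)}

/-- System 2: h2 = 0, s = 1, 2 unused. -/
def S2 : CS (Fin 3) Bool where
  St := fun _ => Bool
  init := fun _ => false
  delta := fun p =>
    if p = 0 then
      {(false, ⟨1,0,.inp,ma⟩, false), (false, ⟨1,0,.inp,mc⟩, true), (true, ⟨1,0,.inp,ma⟩, true)}
    else if p = 1 then {(false, ⟨1,0,.out,ma⟩, false)}
    else ∅

def Sb : Bool → CS (Fin 3) Bool
  | false => S1
  | true => S2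

def hhb : ∀ _ : Bool, Fin 3 := fun _ => 0

def CMx : Set (Bool × Bool × Bool) := {x | x.1 = true ∧ x.2.2 = false}

def KdF : Set (Bool × Act Bool Bool × Bool) :=
  {(false, ⟨true,false,.inp,ma⟩, false), (false, ⟨true,false,.inp,mc⟩, true),
   (true, ⟨true,false,.inp,ma⟩, true)}

def KdT : Set (Bool × Act Bool Bool × Bool) :=
  {(false, ⟨true,false,.out,ma⟩, false), (false, ⟨true,false,.out,mc⟩, true),
   (true, ⟨true,false,.out,ma⟩, true)}

def Kdb : ∀ b : Bool, Set ((Sb b).St (hhb b) × Act Bool Bool × (Sb b).St (hhb b))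
  | false => KdF
  | true => KdT

attribute [reducible] S1 S2 Sb

example : ∀ b, (Sb b).WellFormed := by
  intro b p t ht
  cases b <;> fin_cases p <;>
    simp [Sb, S1, S2, CS.WellFormed] at ht ⊢ <;>
    first
      | (rcases ht with h | h | h <;> subst h <;> constructor <;> decide)
      | (subst ht; constructor <;> decide)

end Ctrex

namespace Ctrex
open CFSM

lemma wf : ∀ b, (Sb b).WellFormed := by
  intro b p t ht
  cases b <;> fin_cases p <;>
    simp [Sb, S1, S2, CS.WellFormed] at ht ⊢ <;>
    first
      | (rcases ht with h | h | h <;> subst h <;> constructor <;> decide)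
      | (subst ht; constructor <;> decide)

lemma nomixed : ∀ b, NoMixed ((Sb b).delta (hhb b)) := by
  intro b q hq
  obtain ⟨⟨l1, q1, h1, d1⟩, ⟨l2, q2, h2, d2⟩⟩ := hq
  cases b <;> simp [Sb, hhb, S1, S2] at h1 h2 <;>
    rcases h1 with h | h | h <;> rcases h2 with g | g | g <;>
      simp_all

lemma connmodel : IsConnModel Sb hhb CMx := by
  intro i a
  constructor
  · rintro ⟨q, s, q', hq⟩
    cases i
    · exfalso; simp [Sb, hhb, S1] at hq
    · refine ⟨false, by simp, ?_, by simp [CMx]⟩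
      simp [Sb, hhb, S2] at hq
      rcases hq with h | h | h
      · have : a = ma := by tauto
        subst this; exact ⟨false, 1, false, by simp [Sb, hhb, S1]⟩
      · have : a = mc := by tauto
        subst this; exact ⟨false, 2, true, by simp [Sb, hhb, S1]⟩
      · have : a = ma := by tauto
        subst this; exact ⟨false, 1, false, by simp [Sb, hhb, S1]⟩
  · rintro ⟨q, r, q', hq⟩
    cases i
    · refine ⟨true, by simp, ?_, by simp [CMx]⟩
      simp [Sb, hhb, S1] at hq
      rcases hq with h | h | h
      · have : a = ma := by tauto
        subst this; exact ⟨false, 1, false, by simp [Sb, hhb, S2]⟩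
      · have : a = mc := by tauto
        subst this; exact ⟨false, 1, true, by simp [Sb, hhb, S2]⟩
      · have : a = ma := by tauto
        subst this; exact ⟨false, 1, false, by simp [Sb, hhb, S2]⟩
    · exfalso; simp [Sb, hhb, S2] at hq

lemma connpolicy : IsConnPolicy Sb hhb CMx Kdb := by
  intro i
  constructor
  · constructor
    · -- (*) inputs of h_i
      intro q r a q' hq
      cases i
      · exfalso; simp [Sb, hhb, S1] at hq
      · refine ⟨false, by simp, by simp [CMx], ?_⟩
        simp [Sb, hhb, S2] at hq
        simp [Kdb, KdT]
        tauto
    · -- (**) outputs of h_i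
      intro q r a q' hq
      cases i
      · refine ⟨true, by simp, by simp [CMx], ?_⟩
        simp [Sb, hhb, S1] at hq
        simp [Kdb, KdF]
        tauto
      · exfalso; simp [Sb, hhb, S2] at hq
  · -- minimality
    intro d' hsub hsat
    apply Set.Subset.antisymm hsub
    intro t ht
    cases i
    · obtain ⟨hin, hout⟩ := hsat
      simp [Kdb, KdF] at ht
      rcases ht with h | h | h <;> subst h
      · obtain ⟨j, hj, _, hd⟩ := hout false 1 ma false (by simp [Sb, hhb, S1])
        rcases j with _ | _
        · simp at hj
        · exact hd
      · obtain ⟨j, hj, _, hd⟩ := hout false 2 mc true (by simp [Sb, hhb, S1])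
        rcases j with _ | _
        · simp at hj
        · exact hd
      · obtain ⟨j, hj, _, hd⟩ := hout true 1 ma true (by simp [Sb, hhb, S1])
        rcases j with _ | _
        · simp at hj
        · exact hd
    · obtain ⟨hin, hout⟩ := hsat
      simp [Kdb, KdT] at ht
      rcases ht with h | h | h <;> subst h
      · obtain ⟨j, hj, _, hd⟩ := hin false 1 ma false (by simp [Sb, hhb, S2])
        rcases j with _ | _
        · exact hd
        · simp at hj
      · obtain ⟨j, hj, _, hd⟩ := hin false 1 mc true (by simp [Sb, hhb, S2])
        rcases j with _ | _
        · exact hd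
        · simp at hj
      · obtain ⟨j, hj, _, hd⟩ := hin true 1 ma true (by simp [Sb, hhb, S2])
        rcases j with _ | _
        · exact hd
        · simp at hj

end Ctrex

namespace Ctrex
open CFSM

lemma mem_mpr {X Y : Type} (e : Set X = Set Y) (h : X = Y) (D : Set Y) (t : X) :
    (t ∈ Eq.mpr e D) ↔ cast h t ∈ D := by subst h; rfl

lemma cast_triple {X Y A' : Type} (h : X = Y) (h2 : (X × A' × X) = (Y × A' × Y))
    (q q' : X) (l : A') : cast h2 (q, l, q') = (cast h q, l, cast h q') := by subst h; rfl

lemma cast_mpr {X Y : Type} (h1 : X = Y) (h2 : X = Y) (v : Y) :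
    cast h1 (Eq.mpr h2 v) = v := by subst h1; rfl

lemma stMC_eq_gw : (MC Sb hhb Kdb).St ⟨false, (0:Fin 3)⟩ = GWState Sb hhb false := by
  simp [MC, MCSt, hhb]

lemma mem_delta_gw (i : Bool) (q q' : (MC Sb hhb Kdb).St ⟨i, (0:Fin 3)⟩)
    (l : Act ((j:Bool) × Fin 3) Bool) :
    ((q, l, q') ∈ (MC Sb hhb Kdb).delta ⟨i, 0⟩) ↔
      (toGW Sb hhb i q, l, toGW Sb hhb i q') ∈ GWdelta Sb hhb Kdb i := by
  have h : MCSt Sb hhb ⟨i, (0:Fin 3)⟩ = GWState Sb hhb i := by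
    simp [MCSt, hhb]
  simp only [MC]
  have hc : (0:Fin 3) = hhb i := rfl
  rw [dif_pos hc]
  refine (mem_mpr _ (by simp [h]) _ _).trans ?_
  erw [cast_triple h]
  rfl

end Ctrex

namespace Ctrex
open CFSM

lemma mem_delta_loc (i : Bool) (p : Fin 3) (hp : p ≠ hhb i)
    (q q' : (MC Sb hhb Kdb).St ⟨i, p⟩) (l : Act ((j:Bool) × Fin 3) Bool) :
    ((q, l, q') ∈ (MC Sb hhb Kdb).delta ⟨i, p⟩) ↔
      ∃ l0, (toLoc Sb hhb hp q, l0, toLoc Sb hhb hp q') ∈ (Sb i).delta p ∧ l = liftAct i l0 := by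
  have hp' : ¬ (p = (0:Fin 3)) := hp
  have h : MCSt Sb hhb ⟨i, p⟩ = (Sb i).St p := by
    simp [MCSt, hhb, hp']
  simp only [MC]
  rw [dif_neg hp]
  refine (mem_mpr _ (by simp [h]) _ _).trans ?_
  erw [cast_triple h]
  constructor
  · rintro ⟨q0, l0, q0', hmem, heq⟩
    obtain ⟨e1, e2, e3⟩ : cast h q = q0 ∧ l = liftAct i l0 ∧ cast h q' = q0' := by
      simpa [Prod.ext_iff] using heq
    refine ⟨l0, ?_, e2⟩
    rw [show toLoc Sb hhb hp q = cast h q from rfl, show toLoc Sb hhb hp q' = cast h q' from rfl,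
      e1, e3]
    exact hmem
  · rintro ⟨l0, hmem, rfl⟩
    exact ⟨_, l0, _, hmem, rfl⟩

lemma initMC_gw (i : Bool) :
    toGW Sb hhb i (((MC Sb hhb Kdb).initConfig).st ⟨i, (0:Fin 3)⟩) = Sum.inl ((Sb i).init 0) := by
  have hc : (0:Fin 3) = hhb i := rfl
  simp only [MC, CS.initConfig]
  rw [dif_pos hc]
  exact cast_mpr _ _ _

lemma initMC_loc (i : Bool) (p : Fin 3) (hp : p ≠ hhb i) :
    toLoc Sb hhb hp (((MC Sb hhb Kdb).initConfig).st ⟨i, p⟩) = (Sb i).init p := by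
  simp only [MC, CS.initConfig]
  rw [dif_neg hp]
  exact cast_mpr _ _ _

end Ctrex

namespace Ctrex
open CFSM

/-- Generic constructor for output steps. -/
lemma stepL_out {P A : Type} [DecidableEq P] (S : CS P A) (cf : Config S)
    (s r : P) (m : A) (q' : S.St s)
    (hd : (cf.st s, Act.mk s r .out m, q') ∈ S.delta s) :
    StepL S cf (Act.mk s r .out m)
      ⟨Function.update cf.st s q',
       fun p q => if (p, q) = (s, r) then cf.ch s r ++ [m] else cf.ch p q⟩ := by
  refine ⟨?_, ?_, ?_, ?_⟩
  · simpa using hd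
  · intro p hp; exact Function.update_of_ne hp _ _
  · simp
  · intro p q hpq; simp [hpq]

/-- Generic constructor for input steps. -/
lemma stepL_inp {P A : Type} [DecidableEq P] (S : CS P A) (cf : Config S)
    (s r : P) (m : A) (q' : S.St r) (rest : List A)
    (hd : (cf.st r, Act.mk s r .inp m, q') ∈ S.delta r)
    (hch : cf.ch s r = m :: rest) :
    StepL S cf (Act.mk s r .inp m)
      ⟨Function.update cf.st r q',
       fun p q => if (p, q) = (s, r) then rest else cf.ch p q⟩ := by
  refine ⟨?_, ?_, ?_, ?_⟩
  · simpa using hd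
  · intro p hp; exact Function.update_of_ne hp _ _
  · simpa using hch
  · intro p q hpq; simp [hpq]

lemma fin3cases (p : Fin 3) : p = 0 ∨ p = 1 ∨ p = 2 := by revert p; decide

lemma all_eq_cons {m : Bool} {L : List Bool} (h : ∀ x ∈ L, x = m) (hne : L ≠ []) :
    L = m :: L.tail := by
  cases L with
  | nil => simp at hne
  | cons y t => simp [h y (by simp)]

/-- Invariant for S1. -/
def Inv1 (cf : Config (Sb false)) : Prop :=
  (∀ x ∈ cf.ch 0 1, x = ma) ∧ (∀ x ∈ cf.ch 0 2, x = mc) ∧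
  (cf.st 0 = true → cf.st 2 = true ∨ cf.ch 0 2 ≠ [])

lemma inv1_step {cf cf' : Config (Sb false)} (hi : Inv1 cf) (hs : Step (Sb false) cf cf') :
    Inv1 cf' := by
  obtain ⟨⟨s, r, dir, m⟩, hl⟩ := hs
  obtain ⟨h1, h2, h3⟩ := hi
  cases dir
  · -- output
    obtain ⟨hd, hst, hch, hoth⟩ := hl
    rcases fin3cases s with rfl | rfl | rfl
    · -- machine 0
      simp [Sb, S1] at hd
      rcases hd with ⟨e0, ⟨rfl, rfl⟩, e1⟩ | ⟨e0, ⟨rfl, rfl⟩, e1⟩ | ⟨e0, ⟨rfl, rfl⟩, e1⟩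
      · refine ⟨?_, ?_, ?_⟩
        · rw [hch]; intro x hx; rcases List.mem_append.1 hx with h | h
          · exact h1 x h
          · simpa using h
        · rw [hoth 0 2 (by decide)]; exact h2
        · rw [e1]; intro h0
          simp at h0
      · refine ⟨?_, ?_, ?_⟩
        · rw [hoth 0 1 (by decide)]; exact h1
        · rw [hch]; intro x hx; rcases List.mem_append.1 hx with h | h
          · exact h2 x h
          · simpa using h
        · intro _; right; rw [hch]; simp
      · refine ⟨?_, ?_, ?_⟩
        · rw [hch]; intro x hx; rcases List.mem_append.1 hx with h | h
          · exact h1 x h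
          · simpa using h
        · rw [hoth 0 2 (by decide)]; exact h2
        · rw [e1]; intro h0
          rw [hst 2 (by decide), hoth 0 2 (by decide)]
          exact h3 e0
    · simp [Sb, S1] at hd
    · simp [Sb, S1] at hd
  · -- input
    obtain ⟨hd, hst, hch, hoth⟩ := hl
    rcases fin3cases r with rfl | rfl | rfl
    · simp [Sb, S1] at hd
    · -- machine 1 receives
      simp [Sb, S1] at hd
      obtain ⟨e0, ⟨rfl, rfl⟩, e1⟩ := hd
      refine ⟨?_, ?_, ?_⟩
      · intro x hx; exact h1 x (by rw [hch]; exact List.mem_cons_of_mem _ hx)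
      · rw [hoth 0 2 (by decide)]; exact h2
      · rw [hst 0 (by decide), hst 2 (by decide), hoth 0 2 (by decide)]; exact h3
    · -- machine 2 receives
      simp [Sb, S1] at hd
      obtain ⟨e0, ⟨rfl, rfl⟩, e1⟩ := hd
      refine ⟨?_, ?_, ?_⟩
      · rw [hoth 0 1 (by decide)]; exact h1
      · intro x hx; exact h2 x (by rw [hch]; exact List.mem_cons_of_mem _ hx)
      · intro _; left; rw [e1]

lemma inv1_rc {cf : Config (Sb false)} (h : cf ∈ RC (Sb false)) : Inv1 cf := by
  induction h with
  | refl => exact ⟨by simp [CS.initConfig, Sb], by simp [CS.initConfig, Sb], by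
      simp [CS.initConfig, Sb, S1]⟩
  | tail _ hstep ih => exact inv1_step ih hstep

lemma lockfree1 : LockFree (Sb false) := by
  intro cf hrc p hpl
  obtain ⟨⟨⟨l0, q0, hl0⟩, hrecv⟩, hnosub⟩ := hpl
  obtain ⟨h1, h2, h3⟩ := inv1_rc hrc
  rcases fin3cases p with rfl | rfl | rfl
  · -- machine 0 is never receiving
    rcases e : cf.st 0 with _ | _
    · have := hrecv ⟨0,1,.out,ma⟩ false (by rw [e]; simp [Sb, S1])
      simp at this
    · have := hrecv ⟨0,1,.out,ma⟩ true (by rw [e]; simp [Sb, S1])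
      simp at this
  · -- machine 1
    rcases e : cf.st 1 with _ | _
    · -- build: 0 sends a, then 1 receives
      have hd : (cf.st 0, Act.mk 0 1 .out ma, cf.st 0) ∈ (Sb false).delta 0 := by
        rcases cf.st 0 <;> simp [Sb, S1]
      have hstep1 := stepL_out (Sb false) cf 0 1 ma (cf.st 0) hd
      set c1 : Config (Sb false) :=
        ⟨Function.update cf.st 0 (cf.st 0),
         fun p q => if (p, q) = (0, 1) then cf.ch 0 1 ++ [ma] else cf.ch p q⟩ with hc1
      have hch1 : c1.ch 0 1 = ma :: (c1.ch 0 1).tail := by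
        apply all_eq_cons
        · intro x hx; simp [hc1] at hx
          rcases hx with h | h
          · exact h1 x h
          · simp [h]
        · simp [hc1]
      have hst1 : c1.st 1 = false := by
        rw [hc1]; simpa [Function.update_of_ne (show (1:Fin 3) ≠ 0 by decide)] using e
      have hd2 : (c1.st 1, Act.mk 0 1 .inp ma, false) ∈ (Sb false).delta 1 := by
        rw [hst1]; simp [Sb, S1]
      have hstep2 := stepL_inp (Sb false) c1 0 1 ma false _ hd2 hch1
      exact hnosub c1 _ _ (Relation.ReflTransGen.single ⟨_, hstep1⟩) hstep2 (by decide)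
    · -- st 1 = true is final
      rw [e] at hl0; simp [Sb, S1] at hl0
  · -- machine 2
    rcases e : cf.st 2 with _ | _
    · rcases e0 : cf.st 0 with _ | _
      · -- 0 sends c, then 2 receives
        have hd : (cf.st 0, Act.mk 0 2 .out mc, true) ∈ (Sb false).delta 0 := by
          rw [e0]; simp [Sb, S1]
        have hstep1 := stepL_out (Sb false) cf 0 2 mc true hd
        set c1 : Config (Sb false) :=
          ⟨Function.update cf.st 0 true,
           fun p q => if (p, q) = (0, 2) then cf.ch 0 2 ++ [mc] else cf.ch p q⟩ with hc1
        have hch1 : c1.ch 0 2 = mc :: (c1.ch 0 2).tail := by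
          apply all_eq_cons
          · intro x hx; simp [hc1] at hx
            rcases hx with h | h
            · exact h2 x h
            · simp [h]
          · simp [hc1]
        have hst1 : c1.st 2 = false := by
          rw [hc1]; simpa [Function.update_of_ne (show (2:Fin 3) ≠ 0 by decide)] using e
        have hd2 : (c1.st 2, Act.mk 0 2 .inp mc, true) ∈ (Sb false).delta 2 := by
          rw [hst1]; simp [Sb, S1]
        have hstep2 := stepL_inp (Sb false) c1 0 2 mc true _ hd2 hch1
        exact hnosub c1 _ _ (Relation.ReflTransGen.single ⟨_, hstep1⟩) hstep2 (by decide)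
      · rcases h3 e0 with h | h
        · rw [e] at h; simp at h
        · have hch1 : cf.ch 0 2 = mc :: (cf.ch 0 2).tail := all_eq_cons h2 h
          have hd2 : (cf.st 2, Act.mk 0 2 .inp mc, true) ∈ (Sb false).delta 2 := by
            rw [e]; simp [Sb, S1]
          have hstep2 := stepL_inp (Sb false) cf 0 2 mc true _ hd2 hch1
          exact hnosub cf _ _ Relation.ReflTransGen.refl hstep2 (by decide)
    · rw [e] at hl0; simp [Sb, S1] at hl0

end Ctrex

namespace Ctrex
open CFSM

/-- Invariant for S2. -/
def Inv2 (cf : Config (Sb true)) : Prop :=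
  (∀ x ∈ cf.ch 1 0, x = ma) ∧ cf.st 1 = false

lemma inv2_step {cf cf' : Config (Sb true)} (hi : Inv2 cf) (hs : Step (Sb true) cf cf') :
    Inv2 cf' := by
  obtain ⟨⟨s, r, dir, m⟩, hl⟩ := hs
  obtain ⟨h1, h2⟩ := hi
  cases dir
  · obtain ⟨hd, hst, hch, hoth⟩ := hl
    rcases fin3cases s with rfl | rfl | rfl
    · simp [Sb, S2] at hd
    · -- machine 1 sends a
      simp [Sb, S2] at hd
      obtain ⟨e0, ⟨rfl, rfl⟩, e1⟩ := hd
      refine ⟨?_, e1⟩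
      rw [hch]; intro x hx
      rcases List.mem_append.1 hx with h | h
      · exact h1 x h
      · simpa using h
    · simp [Sb, S2] at hd
  · obtain ⟨hd, hst, hch, hoth⟩ := hl
    rcases fin3cases r with rfl | rfl | rfl
    · -- machine 0 receives
      simp [Sb, S2] at hd
      have hsr : s = 1 := by rcases hd with ⟨_, ⟨h, _⟩, _⟩ | ⟨_, ⟨h, _⟩, _⟩ | ⟨_, ⟨h, _⟩, _⟩ <;>
        exact h
      subst hsr
      refine ⟨?_, by rw [hst 1 (by simp)]; exact h2⟩
      intro x hx
      exact h1 x (by rw [hch]; exact List.mem_cons_of_mem _ hx)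
    · simp [Sb, S2] at hd
    · simp [Sb, S2] at hd

lemma inv2_rc {cf : Config (Sb true)} (h : cf ∈ RC (Sb true)) : Inv2 cf := by
  induction h with
  | refl => exact ⟨by simp [CS.initConfig, Sb], by simp [CS.initConfig, Sb, S2]⟩
  | tail _ hstep ih => exact inv2_step ih hstep

lemma lockfree2 : LockFree (Sb true) := by
  intro cf hrc p hpl
  obtain ⟨⟨⟨l0, q0, hl0⟩, hrecv⟩, hnosub⟩ := hpl
  obtain ⟨h1, h2⟩ := inv2_rc hrc
  rcases fin3cases p with rfl | rfl | rfl
  · -- machine 0: 1 sends a, then 0 receives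
    have hd : (cf.st 1, Act.mk 1 0 .out ma, false) ∈ (Sb true).delta 1 := by
      rw [h2]; simp [Sb, S2]
    have hstep1 := stepL_out (Sb true) cf 1 0 ma false hd
    set c1 : Config (Sb true) :=
      ⟨Function.update cf.st 1 false,
       fun p q => if (p, q) = (1, 0) then cf.ch 1 0 ++ [ma] else cf.ch p q⟩ with hc1
    have hch1 : c1.ch 1 0 = ma :: (c1.ch 1 0).tail := by
      apply all_eq_cons
      · intro x hx; simp [hc1] at hx
        rcases hx with h | h
        · exact h1 x h
        · simp [h]
      · simp [hc1]
    have hst1 : c1.st 0 = cf.st 0 := by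
      rw [hc1]; exact Function.update_of_ne (show (0:Fin 3) ≠ 1 by decide) false cf.st
    have hd2 : (c1.st 0, Act.mk 1 0 .inp ma, cf.st 0) ∈ (Sb true).delta 0 := by
      rw [hst1]; rcases cf.st 0 <;> simp [Sb, S2]
    have hstep2 := stepL_inp (Sb true) c1 1 0 ma (cf.st 0) _ hd2 hch1
    exact hnosub c1 (Act.mk 1 0 .inp ma) _ (Relation.ReflTransGen.single ⟨_, hstep1⟩) hstep2 rfl
  · -- machine 1 is never receiving
    rw [h2] at hrecv
    have := hrecv ⟨1,0,.out,ma⟩ false (by simp [Sb, S2])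
    simp at this
  · -- machine 2 has no transitions
    simp [Sb, S2] at hl0

end Ctrex

namespace Ctrex
open CFSM

abbrev KS := policyCS Sb hhb Kdb

/-- Invariant for the connection policy system. -/
def InvK (cf : Config KS) : Prop :=
  (cf.st true = false ∧ cf.st false = false ∧ ∀ x ∈ cf.ch true false, x = ma) ∨
  (cf.st true = true ∧ cf.st false = false ∧
    ∃ i j, cf.ch true false = List.replicate i ma ++ mc :: List.replicate j ma) ∨
  (cf.st true = true ∧ cf.st false = true ∧ ∀ x ∈ cf.ch true false, x = ma)

lemma invK_step {cf cf' : Config KS} (hi : InvK cf) (hs : Step KS cf cf') : InvK cf' := by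
  obtain ⟨⟨s, r, dir, m⟩, hl⟩ := hs
  cases dir
  · -- output
    obtain ⟨hd, hst, hch, hoth⟩ := hl
    cases s
    · delta KS policyCS at hd; simp [policyCS, Kdb, KdF] at hd
    · have hstf : cf'.st false = cf.st false := hst false (by simp)
      delta KS policyCS at hd; simp [policyCS, Kdb, KdT] at hd
      rcases hd with ⟨e0, ⟨rfl, rfl⟩, e1⟩ | ⟨e0, ⟨rfl, rfl⟩, e1⟩ | ⟨e0, ⟨rfl, rfl⟩, e1⟩
      · -- (f, !a, f)
        rcases hi with ⟨g1, g2, g3⟩ | ⟨g1, _, _⟩ | ⟨g1, _, _⟩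
        · left; refine ⟨e1, by rw [hstf]; exact g2, ?_⟩
          rw [hch]; intro x hx
          rcases List.mem_append.1 hx with h | h
          · exact g3 x h
          · simpa using h
        · rw [e0] at g1; simp at g1
        · rw [e0] at g1; simp at g1
      · -- (f, !c, t)
        rcases hi with ⟨g1, g2, g3⟩ | ⟨g1, _, _⟩ | ⟨g1, _, _⟩
        · right; left
          refine ⟨e1, by rw [hstf]; exact g2, (cf.ch true false).length, 0, ?_⟩
          rw [hch, List.eq_replicate_of_mem g3]
          simp
        · rw [e0] at g1; simp at g1
        · rw [e0] at g1; simp at g1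
      · -- (t, !a, t)
        rcases hi with ⟨g1, _, _⟩ | ⟨g1, g2, i, j, g3⟩ | ⟨g1, g2, g3⟩
        · rw [e0] at g1; simp at g1
        · right; left
          refine ⟨e1, by rw [hstf]; exact g2, i, j + 1, ?_⟩
          rw [hch, g3]
          simp [List.replicate_succ', List.append_assoc]
        · right; right
          refine ⟨e1, by rw [hstf]; exact g2, ?_⟩
          rw [hch]; intro x hx
          rcases List.mem_append.1 hx with h | h
          · exact g3 x h
          · simpa using h
  · -- input
    obtain ⟨hd, hst, hch, hoth⟩ := hl
    cases r
    · have hstt : cf'.st true = cf.st true := hst true (by simp)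
      delta KS policyCS at hd; simp [policyCS, Kdb, KdF] at hd
      rcases hd with ⟨e0, ⟨rfl, rfl⟩, e1⟩ | ⟨e0, ⟨rfl, rfl⟩, e1⟩ | ⟨e0, ⟨rfl, rfl⟩, e1⟩
      · -- (f, ?a, f)
        rcases hi with ⟨g1, g2, g3⟩ | ⟨g1, g2, i, j, g3⟩ | ⟨g1, g2, g3⟩
        · left; refine ⟨by rw [hstt]; exact g1, e1, ?_⟩
          intro x hx
          exact g3 x (by rw [hch]; exact List.mem_cons_of_mem _ hx)
        · right; left
          refine ⟨by rw [hstt]; exact g1, e1, ?_⟩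
          cases i with
          | zero =>
            exfalso
            rw [hch] at g3; simp at g3
          | succ i' =>
            refine ⟨i', j, ?_⟩
            have h := congrArg List.tail g3
            rw [hch] at h
            simpa [List.replicate_succ] using h
        · rw [e0] at g2; simp at g2
      · -- (f, ?c, t)
        rcases hi with ⟨g1, g2, g3⟩ | ⟨g1, g2, i, j, g3⟩ | ⟨g1, g2, g3⟩
        · exfalso
          have : mc ∈ cf.ch true false := by rw [hch]; simp
          have := g3 _ this; simp [ma, mc] at this
        · right; right
          refine ⟨by rw [hstt]; exact g1, e1, ?_⟩
          cases i with
          | zero =>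
            have h := congrArg List.tail g3
            rw [hch] at h
            simp at h
            rw [h]; intro x hx
            exact List.eq_of_mem_replicate hx
          | succ i' =>
            exfalso
            rw [hch] at g3; simp [List.replicate_succ, ma, mc] at g3
        · rw [e0] at g2; simp at g2
      · -- (t, ?a, t)
        rcases hi with ⟨g1, g2, g3⟩ | ⟨g1, g2, i, j, g3⟩ | ⟨g1, g2, g3⟩
        · rw [e0] at g2; simp at g2
        · rw [e0] at g2; simp at g2
        · right; right
          refine ⟨by rw [hstt]; exact g1, e1, ?_⟩
          intro x hx
          exact g3 x (by rw [hch]; exact List.mem_cons_of_mem _ hx)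
    · delta KS policyCS at hd; simp [policyCS, Kdb, KdT] at hd

lemma invK_rc {cf : Config KS} (h : cf ∈ RC KS) : InvK cf := by
  induction h with
  | refl => exact Or.inl ⟨rfl, rfl, by simp [CS.initConfig]⟩
  | tail _ hstep ih => exact invK_step ih hstep

lemma lockfreeK : LockFree KS := by
  intro cf hrc p hpl
  obtain ⟨⟨⟨l0, q0, hl0⟩, hrecv⟩, hnosub⟩ := hpl
  have hik := invK_rc hrc
  cases p
  · -- machine false (k_false)
    have hd : (cf.st true, Act.mk true false .out ma, cf.st true) ∈ KS.delta true := by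
      rcases cf.st true <;> (delta KS policyCS; simp [policyCS, Kdb, KdT])
    have hstep1 := stepL_out KS cf true false ma (cf.st true) hd
    set c1 : Config KS :=
      ⟨Function.update cf.st true (cf.st true),
       fun p q => if (p, q) = (true, false) then cf.ch true false ++ [ma] else cf.ch p q⟩
       with hc1
    have hne : c1.ch true false ≠ [] := by simp [hc1]
    have hstf : c1.st false = cf.st false := by
      rw [hc1]; exact Function.update_of_ne (show false ≠ true by simp) (cf.st true) cf.st
    rcases e : cf.st false with _ | _
    · -- any head can be received
      have hch1 : c1.ch true false = (c1.ch true false).head hne :: (c1.ch true false).tail :=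
        (List.cons_head_tail hne).symm
      have hd2 : (c1.st false,
          Act.mk true false .inp ((c1.ch true false).head hne),
          (c1.ch true false).head hne) ∈ KS.delta false := by
        rw [hstf, e]
        rcases (c1.ch true false).head hne <;> (delta KS policyCS; simp [policyCS, Kdb, KdF, ma, mc])
      have hstep2 := stepL_inp KS c1 true false _ _ _ hd2 hch1
      exact hnosub c1 (Act.mk true false .inp ((c1.ch true false).head hne)) _
        (Relation.ReflTransGen.single ⟨_, hstep1⟩) hstep2 rfl
    · -- st false = true: invariant says channel is all ma
      have g3 : ∀ x ∈ cf.ch true false, x = ma := by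
        rcases hik with ⟨_, g2, _⟩ | ⟨_, g2, _⟩ | ⟨_, _, g3⟩
        · rw [e] at g2; simp at g2
        · rw [e] at g2; simp at g2
        · exact g3
      have hch1 : c1.ch true false = ma :: (c1.ch true false).tail := by
        apply all_eq_cons _ hne
        intro x hx; simp [hc1] at hx
        rcases hx with h | h
        · exact g3 x h
        · simp [h]
      have hd2 : (c1.st false, Act.mk true false .inp ma, true) ∈ KS.delta false := by
        rw [hstf, e]; delta KS policyCS; simp [policyCS, Kdb, KdF]
      have hstep2 := stepL_inp KS c1 true false ma true _ hd2 hch1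
      exact hnosub c1 (Act.mk true false .inp ma) _
        (Relation.ReflTransGen.single ⟨_, hstep1⟩) hstep2 rfl
  · -- machine true (k_true) is never receiving
    rcases e : cf.st true with _ | _
    · have := hrecv (Act.mk true false .out ma) false (by rw [e]; delta KS policyCS; simp [policyCS, Kdb, KdT])
      simp at this
    · have := hrecv (Act.mk true false .out ma) true (by rw [e]; delta KS policyCS; simp [policyCS, Kdb, KdT])
      simp at this

end Ctrex

namespace Ctrex
open CFSM

local notation "MCx" => MC Sb hhb Kdb

/-- Invariant for the multicomposition. -/
def Phi (cf : Config MCx) : Prop :=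
  (∀ x ∈ cf.ch ⟨true,1⟩ ⟨true,0⟩, x = ma) ∧
  (toGW Sb hhb true (cf.st ⟨true,0⟩) ≠ Sum.inr (false, Act.mk 1 0 .inp mc, true)) ∧
  (∀ x ∈ cf.ch ⟨true,0⟩ ⟨false,0⟩, x = ma) ∧
  (toGW Sb hhb false (cf.st ⟨false,0⟩) ≠ Sum.inr (false, Act.mk 0 2 .out mc, true)) ∧
  (cf.ch ⟨false,0⟩ ⟨false,2⟩ = [])

lemma phi_step {cf cf' : Config MCx} (hi : Phi cf) (hs : Step MCx cf cf') : Phi cf' := by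
  obtain ⟨g1, g2, g3, g4, g5⟩ := hi
  obtain ⟨⟨⟨is, ps⟩, ⟨ir, pr⟩, dir, m⟩, hl⟩ := hs
  cases dir
  · -- ---------------- output steps ----------------
    obtain ⟨hd, hst, hch, hoth⟩ := hl
    dsimp only at hd hst hch hoth
    cases is <;> rcases fin3cases ps with rfl | rfl | rfl
    -- machine ⟨false,0⟩ : gateway 1 output
    · rw [mem_delta_gw] at hd
      simp [GWdelta, Sb, hhb, S1, S2, Kdb, KdF, KdT] at hd
      rcases hd with (⟨e1,⟨⟨rfl,rfl⟩,rfl⟩,e3⟩ | ⟨e1,⟨⟨rfl,rfl⟩,rfl⟩,e3⟩) | ⟨e1,⟨⟨rfl,rfl⟩,rfl⟩,e3⟩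
      all_goals first
        | (exact absurd e1 g4)
        | (refine ⟨?_, ?_, ?_, ?_, ?_⟩
           · rw [hoth ⟨true,1⟩ ⟨true,0⟩ (by decide)]; exact g1
           · rw [congrArg (toGW Sb hhb true) (hst ⟨true,0⟩ (by decide))]; exact g2
           · rw [hoth ⟨true,0⟩ ⟨false,0⟩ (by decide)]; exact g3
           · rw [e3]; simp
           · rw [hoth ⟨false,0⟩ ⟨false,2⟩ (by decide)]; exact g5)
    · -- machine ⟨false,1⟩ has no outputs
      rw [mem_delta_loc false 1 (by decide)] at hd
      obtain ⟨l0, hmem, heq⟩ := hd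
      simp [Sb, S1] at hmem
      obtain ⟨_, rfl, _⟩ := hmem
      simp [liftAct] at heq
    · -- machine ⟨false,2⟩ has no outputs
      rw [mem_delta_loc false 2 (by decide)] at hd
      obtain ⟨l0, hmem, heq⟩ := hd
      simp [Sb, S1] at hmem
      obtain ⟨_, rfl, _⟩ := hmem
      simp [liftAct] at heq
    · -- machine ⟨true,0⟩ : gateway 2 output
      rw [mem_delta_gw] at hd
      simp [GWdelta, Sb, hhb, S1, S2, Kdb, KdF, KdT] at hd
      rcases hd with (⟨e1,⟨⟨rfl,rfl⟩,rfl⟩,e3⟩ | ⟨e1,⟨⟨rfl,rfl⟩,rfl⟩,e3⟩) | ⟨e1,⟨⟨rfl,rfl⟩,rfl⟩,e3⟩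
      all_goals first
        | (exact absurd e1 g2)
        | (refine ⟨?_, ?_, ?_, ?_, ?_⟩
           · rw [hoth ⟨true,1⟩ ⟨true,0⟩ (by decide)]; exact g1
           · rw [e3]; simp
           · rw [hch]; intro x hx
             rcases List.mem_append.1 hx with h | h
             · exact g3 x h
             · simpa using h
           · rw [congrArg (toGW Sb hhb false) (hst ⟨false,0⟩ (by decide))]; exact g4
           · rw [hoth ⟨false,0⟩ ⟨false,2⟩ (by decide)]; exact g5)
    · -- machine ⟨true,1⟩ : s sends a
      rw [mem_delta_loc true 1 (by decide)] at hd
      obtain ⟨l0, hmem, heq⟩ := hd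
      simp [Sb, S2] at hmem
      obtain ⟨_, rfl, _⟩ := hmem
      obtain ⟨⟨rfl, rfl⟩, rfl⟩ : (_ ∧ _) ∧ _ := by simpa [liftAct] using heq
      refine ⟨?_, ?_, ?_, ?_, ?_⟩
      · rw [hch]; intro x hx
        rcases List.mem_append.1 hx with h | h
        · exact g1 x h
        · simpa using h
      · rw [congrArg (toGW Sb hhb true) (hst ⟨true,0⟩ (by decide))]; exact g2
      · rw [hoth ⟨true,0⟩ ⟨false,0⟩ (by decide)]; exact g3
      · rw [congrArg (toGW Sb hhb false) (hst ⟨false,0⟩ (by decide))]; exact g4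
      · rw [hoth ⟨false,0⟩ ⟨false,2⟩ (by decide)]; exact g5
    · -- machine ⟨true,2⟩ has no transitions
      rw [mem_delta_loc true 2 (by decide)] at hd
      obtain ⟨l0, hmem, heq⟩ := hd
      simp [Sb, S2] at hmem
  · -- ---------------- input steps ----------------
    obtain ⟨hd, hst, hch, hoth⟩ := hl
    dsimp only at hd hst hch hoth
    cases ir <;> rcases fin3cases pr with rfl | rfl | rfl
    · -- machine ⟨false,0⟩ : gateway 1 input from gateway 2
      rw [mem_delta_gw] at hd
      simp [GWdelta, Sb, hhb, S1, S2, Kdb, KdF, KdT] at hd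
      rcases hd with (⟨e1,⟨⟨rfl,rfl⟩,rfl⟩,e3⟩ | ⟨e1,⟨⟨rfl,rfl⟩,rfl⟩,e3⟩) | ⟨e1,⟨⟨rfl,rfl⟩,rfl⟩,e3⟩
      -- case receiving mc is impossible by g3
      pick_goal 2
      · exfalso
        have : mc ∈ cf.ch ⟨true,0⟩ ⟨false,0⟩ := by rw [hch]; simp
        have := g3 _ this; simp [ma, mc] at this
      all_goals
        refine ⟨?_, ?_, ?_, ?_, ?_⟩
        · rw [hoth ⟨true,1⟩ ⟨true,0⟩ (by decide)]; exact g1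
        · rw [congrArg (toGW Sb hhb true) (hst ⟨true,0⟩ (by decide))]; exact g2
        · intro x hx
          exact g3 x (by rw [hch]; exact List.mem_cons_of_mem _ hx)
        · rw [e3]; simp [ma, mc]
        · rw [hoth ⟨false,0⟩ ⟨false,2⟩ (by decide)]; exact g5
    · -- machine ⟨false,1⟩ : p receives a from gw1
      rw [mem_delta_loc false 1 (by decide)] at hd
      obtain ⟨l0, hmem, heq⟩ := hd
      simp [Sb, S1] at hmem
      obtain ⟨_, rfl, _⟩ := hmem
      obtain ⟨⟨rfl, rfl⟩, rfl⟩ : (_ ∧ _) ∧ _ := by simpa [liftAct] using heq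
      refine ⟨?_, ?_, ?_, ?_, ?_⟩
      · rw [hoth ⟨true,1⟩ ⟨true,0⟩ (by decide)]; exact g1
      · rw [congrArg (toGW Sb hhb true) (hst ⟨true,0⟩ (by decide))]; exact g2
      · rw [hoth ⟨true,0⟩ ⟨false,0⟩ (by decide)]; exact g3
      · rw [congrArg (toGW Sb hhb false) (hst ⟨false,0⟩ (by decide))]; exact g4
      · rw [hoth ⟨false,0⟩ ⟨false,2⟩ (by decide)]; exact g5
    · -- machine ⟨false,2⟩ : impossible, channel to w is empty
      rw [mem_delta_loc false 2 (by decide)] at hd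
      obtain ⟨l0, hmem, heq⟩ := hd
      simp [Sb, S1] at hmem
      obtain ⟨_, rfl, _⟩ := hmem
      obtain ⟨⟨rfl, rfl⟩, rfl⟩ : (_ ∧ _) ∧ _ := by simpa [liftAct] using heq
      rw [g5] at hch
      exact absurd hch (by simp)
    · -- machine ⟨true,0⟩ : gateway 2 input from s
      rw [mem_delta_gw] at hd
      simp [GWdelta, Sb, hhb, S1, S2, Kdb, KdF, KdT] at hd
      rcases hd with (⟨e1,⟨⟨rfl,rfl⟩,rfl⟩,e3⟩ | ⟨e1,⟨⟨rfl,rfl⟩,rfl⟩,e3⟩) | ⟨e1,⟨⟨rfl,rfl⟩,rfl⟩,e3⟩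
      pick_goal 2
      · exfalso
        have : mc ∈ cf.ch ⟨true,1⟩ ⟨true,0⟩ := by rw [hch]; simp
        have := g1 _ this; simp [ma, mc] at this
      all_goals
        refine ⟨?_, ?_, ?_, ?_, ?_⟩
        · intro x hx
          exact g1 x (by rw [hch]; exact List.mem_cons_of_mem _ hx)
        · rw [e3]; simp [ma, mc]
        · rw [hoth ⟨true,0⟩ ⟨false,0⟩ (by decide)]; exact g3
        · rw [congrArg (toGW Sb hhb false) (hst ⟨false,0⟩ (by decide))]; exact g4
        · rw [hoth ⟨false,0⟩ ⟨false,2⟩ (by decide)]; exact g5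
    · -- machine ⟨true,1⟩ has no inputs
      rw [mem_delta_loc true 1 (by decide)] at hd
      obtain ⟨l0, hmem, heq⟩ := hd
      simp [Sb, S2] at hmem
      obtain ⟨_, rfl, _⟩ := hmem
      simp [liftAct] at heq
    · -- machine ⟨true,2⟩ has no transitions
      rw [mem_delta_loc true 2 (by decide)] at hd
      obtain ⟨l0, hmem, heq⟩ := hd
      simp [Sb, S2] at hmem

end Ctrex

namespace Ctrex
open CFSM

lemma cast_cast' {X Y : Type} (h : X = Y) (v : Y) : cast h (cast h.symm v) = v := by
  subst h; rfl

lemma phi_rc {cf : Config (MC Sb hhb Kdb)}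
    (h : Reach (MC Sb hhb Kdb) (MC Sb hhb Kdb).initConfig cf) : Phi cf := by
  induction h with
  | refl =>
    refine ⟨by simp [CS.initConfig], ?_, by simp [CS.initConfig], ?_, by simp [CS.initConfig]⟩
    · rw [initMC_gw]; simp
    · rw [initMC_gw]; simp
  | tail _ hstep ih => exact phi_step ih hstep

lemma plockW : PLockConfig (MC Sb hhb Kdb) (MC Sb hhb Kdb).initConfig ⟨false, 2⟩ := by
  have hp : (2 : Fin 3) ≠ hhb false := by decide
  have hcast : MCSt Sb hhb ⟨false, (2:Fin 3)⟩ = (Sb false).St 2 := by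
    simp [MCSt, hhb]
  constructor
  · -- receiving state
    constructor
    · refine ⟨liftAct false ⟨0,2,.inp,mc⟩, cast hcast.symm true,
        (mem_delta_loc false 2 hp _ _ _).2 ⟨⟨0,2,.inp,mc⟩, ?_, rfl⟩⟩
      rw [initMC_loc false 2 hp]
      erw [show toLoc Sb hhb hp (cast hcast.symm true) = true from cast_cast' hcast true]
      simp [Sb, S1]
    · intro l q' h
      rw [mem_delta_loc false 2 hp] at h
      obtain ⟨l0, hmem, rfl⟩ := h
      simp [Sb, S1] at hmem
      obtain ⟨_, rfl, _⟩ := hmem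
      rfl
  · -- never the subject of any action
    intro c1 l c2 hreach hstep hsubj
    have hphi := phi_rc hreach
    obtain ⟨g1, g2, g3, g4, g5⟩ := hphi
    obtain ⟨⟨is, ps⟩, ⟨ir, pr⟩, dir, m⟩ := l
    cases dir
    · -- output with subject ⟨false,2⟩: machine 2 has no outputs
      obtain ⟨rfl, rfl⟩ : is = false ∧ ps = 2 := by
        simpa [Act.subject] using hsubj
      obtain ⟨hd, -, -, -⟩ := hstep
      dsimp only at hd
      rw [mem_delta_loc false 2 hp] at hd
      obtain ⟨l0, hmem, heq⟩ := hd
      simp [Sb, S1] at hmem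
      obtain ⟨_, rfl, _⟩ := hmem
      simp [liftAct] at heq
    · -- input with subject ⟨false,2⟩: channel gw1 → w is empty
      obtain ⟨rfl, rfl⟩ : ir = false ∧ pr = 2 := by
        simpa [Act.subject] using hsubj
      obtain ⟨hd, -, hch, -⟩ := hstep
      dsimp only at hd hch
      rw [mem_delta_loc false 2 hp] at hd
      obtain ⟨l0, hmem, heq⟩ := hd
      simp [Sb, S1] at hmem
      obtain ⟨_, rfl, _⟩ := hmem
      obtain ⟨⟨rfl, rfl⟩, rfl⟩ : (_ ∧ _) ∧ _ := by simpa [liftAct] using heq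
      rw [g5] at hch
      exact absurd hch (by simp)

lemma notlockfreeMC : ¬ LockFree (MC Sb hhb Kdb) := fun h =>
  h _ Relation.ReflTransGen.refl ⟨false, 2⟩ plockW

end Ctrex
open CFSM in
/-- lock-freeness is not preserved by PaI multicomposition, even when
the interfaces have no mixed states. -/
theorem lockFree_not_preserved :
    ∃ (P : Bool → Type) (A : Type) (S : ∀ b, CS (P b) A) (hh : ∀ b, P b)
      (CM : Set (Bool × A × Bool))
      (Kd : ∀ b, Set ((S b).St (hh b) × Act Bool A × (S b).St (hh b))),
      (∀ b, Finite (P b)) ∧ Finite A ∧ (∀ b p, Finite ((S b).St p)) ∧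
      (∀ b, (S b).WellFormed) ∧
      (∀ b, NoMixed ((S b).delta (hh b))) ∧
      IsConnModel S hh CM ∧
      IsConnPolicy S hh CM Kd ∧
      (∀ b, LockFree (S b)) ∧
      LockFree (policyCS S hh Kd) ∧
      (∃ r, PLockConfig (MC S hh Kd) (MC S hh Kd).initConfig r) ∧
      ¬ LockFree (MC S hh Kd) := by
  refine ⟨fun _ => Fin 3, Bool, Ctrex.Sb, Ctrex.hhb, Ctrex.CMx, Ctrex.Kdb,
    fun _ => inferInstance, inferInstance, ?_, Ctrex.wf, Ctrex.nomixed, Ctrex.connmodel,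
    Ctrex.connpolicy, ?_, Ctrex.lockfreeK, ⟨⟨false, 2⟩, Ctrex.plockW⟩, Ctrex.notlockfreeMC⟩
  · intro b p
    cases b <;> exact inferInstanceAs (Finite Bool)
  · intro b
    cases b
    · exact Ctrex.lockfree1
    · exact Ctrex.lockfree2
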